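/- Let partial preferences rank' in the hybrid-query model be given and suppose that for every agent a there is at least one rank not assigned to any house of rev(a); let ℓ_a denote the largest such unassigned rank. Define maxrank(a,h) = rank'(a,h) if h ∈ rev(a) and maxrank(a,h) = ℓ_a otherwise. If M is a necessarily rank-maximal matching for rank', then M is rank-maximal in the instance with (possibly tied) rank function maxrank, i.e., the signature vector (s_1,…,s_n) with s_l = |{a : maxrank(a, M(a)) = l}| is lexicographically maximal over all matchings. -/

import Mathlib

/-!
Agents and houses are `Fin n`.  Hybrid-query partial preferences: revealed houses
`rev a` with injective rank values `rnk a h` (0-based).  A completion is a complete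
strict profile, given by rank equivalences `P a : Fin n ≃ Fin n` (lower rank = more
preferred), agreeing with `rnk` on all revealed houses.
A matching is a bijection `M : Equiv.Perm (Fin n)`.
-/

/-- `P` is a completion of the hybrid-query partial preferences `(rev, rnk)`. -/
def HQCompletion {n : ℕ} (rev : Fin n → Finset (Fin n)) (rnk : Fin n → Fin n → Fin n)
    (P : Fin n → (Fin n ≃ Fin n)) : Prop :=
  ∀ a, ∀ h ∈ rev a, P a h = rnk a h

/-- The signature of a matching `M` under a (possibly tied) rank function `r`:
`sig r M l` is the number of agents matched to a house they rank `l`. -/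
noncomputable def sig {n : ℕ} (r : Fin n → Fin n → ℕ) (M : Equiv.Perm (Fin n)) (l : ℕ) : ℕ :=
  {a : Fin n | r a (M a) = l}.ncard

/-- `SigDom s t`: signature `s` lexicographically dominates signature `t`. -/
def SigDom (s t : ℕ → ℕ) : Prop :=
  ∃ l : ℕ, (∀ k < l, s k = t k) ∧ t l < s l

/-- `M` is rank-maximal w.r.t. the rank function `r`: its signature is
lexicographically maximal over all matchings. -/
def RankMaximal {n : ℕ} (r : Fin n → Fin n → ℕ) (M : Equiv.Perm (Fin n)) : Prop :=
  ∀ M' : Equiv.Perm (Fin n), ¬ SigDom (sig r M') (sig r M)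

/-- Any injection on a finset of `Fin n` extends to a permutation of `Fin n`. -/
lemma exists_perm_extendOn {n : ℕ} (s : Finset (Fin n)) (f : Fin n → Fin n)
    (hinj : Set.InjOn f s) : ∃ Q : Equiv.Perm (Fin n), ∀ h ∈ s, Q h = f h := by
  classical
  set t : Finset (Fin n) := s.image f with ht
  have hcard : s.card = t.card := (Finset.card_image_of_injOn hinj).symm
  have hbij : Function.Bijective (fun x : {x // x ∈ s} =>
      (⟨f x.1, Finset.mem_image_of_mem f x.2⟩ : {x // x ∈ t})) := by
    have hinj' : Function.Injective (fun x : {x // x ∈ s} =>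
        (⟨f x.1, Finset.mem_image_of_mem f x.2⟩ : {x // x ∈ t})) := by
      rintro ⟨a, ha⟩ ⟨b, hb⟩ hab
      exact Subtype.ext (hinj ha hb (by simpa using congrArg Subtype.val hab))
    have hc : Fintype.card {x // x ∈ s} = Fintype.card {x // x ∈ t} := by
      simpa [Fintype.card_coe] using hcard
    exact (Fintype.bijective_iff_injective_and_card _).2 ⟨hinj', hc⟩
  let e1 : {x // x ∈ s} ≃ {x // x ∈ t} := Equiv.ofBijective _ hbij
  have hc2 : Fintype.card {x // ¬ x ∈ s} = Fintype.card {x // ¬ x ∈ t} := by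
    have h1 : Fintype.card {x // ¬ x ∈ s} = n - Fintype.card {x : Fin n // x ∈ s} := by
      simpa using Fintype.card_subtype_compl (fun x => x ∈ s)
    have h2 : Fintype.card {x // ¬ x ∈ t} = n - Fintype.card {x : Fin n // x ∈ t} := by
      simpa using Fintype.card_subtype_compl (fun x => x ∈ t)
    rw [h1, h2, Fintype.card_coe, Fintype.card_coe, hcard]
  let e2 : {x // ¬ x ∈ s} ≃ {x // ¬ x ∈ t} := Fintype.equivOfCardEq hc2
  refine ⟨Equiv.subtypeCongr e1 e2, ?_⟩
  intro h hh
  simp [Equiv.subtypeCongr, Equiv.sumCompl_symm_apply_of_pos hh, e1, Equiv.ofBijective]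

/-- Lexicographic domination is transitive. -/
lemma sigDom_trans' {s t u : ℕ → ℕ} (h1 : SigDom s t) (h2 : SigDom t u) : SigDom s u := by
  obtain ⟨l1, he1, hl1⟩ := h1
  obtain ⟨l2, he2, hl2⟩ := h2
  refine ⟨min l1 l2, fun k hk => by
    rw [he1 k (lt_of_lt_of_le hk (min_le_left _ _)),
      he2 k (lt_of_lt_of_le hk (min_le_right _ _))], ?_⟩
  rcases lt_trichotomy l1 l2 with h | h | h
  · rw [min_eq_left h.le, ← he2 l1 h]; exact hl1
  · subst h; rw [min_self]; exact hl2.trans hl1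
  · rw [min_eq_right h.le, he1 l2 h]; exact hl2

/-- If `f ≤ g` pointwise, the count-signature of `f` either equals that of `g` or
lexicographically dominates it. -/
lemma cnt_eq_or_dom {n : ℕ} (f g : Fin n → ℕ) (hle : ∀ a, f a ≤ g a) :
    (∀ k, {a | f a = k}.ncard = {a | g a = k}.ncard) ∨
    SigDom (fun k => {a | f a = k}.ncard) (fun k => {a | g a = k}.ncard) := by
  classical
  by_cases hD : ∀ a, f a = g a
  · exact Or.inl fun k => by congr 1; ext a; simp [hD a]
  · right
    push_neg at hD
    set D : Finset (Fin n) := Finset.univ.filter (fun a => f a < g a) with hDdef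
    have hne : (D.image f).Nonempty := by
      obtain ⟨a, ha⟩ := hD
      exact ⟨f a, Finset.mem_image_of_mem f (by simp [hDdef, lt_of_le_of_ne (hle a) ha])⟩
    set m := (D.image f).min' hne with hm
    have hmem := (D.image f).min'_mem hne
    rw [← hm] at hmem
    obtain ⟨a0, ha0D, ha0⟩ := Finset.mem_image.1 hmem
    have hmle : ∀ a ∈ D, m ≤ f a := fun a ha => Finset.min'_le _ _ (Finset.mem_image_of_mem f ha)
    have hnotD : ∀ a, a ∉ D → f a = g a := by
      intro a ha
      have : ¬ f a < g a := by simpa [hDdef] using ha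
      exact le_antisymm (hle a) (not_lt.1 this)
    refine ⟨m, ?_, ?_⟩
    · intro k hk
      have hset : {a | f a = k} = {a | g a = k} := by
        ext a
        simp only [Set.mem_setOf_eq]
        constructor
        · intro hfa
          have : a ∉ D := fun ha => absurd (hmle a ha) (by omega)
          rw [← hnotD a this]; exact hfa
        · intro hga
          have haD : a ∉ D := by
            intro ha
            have := hmle a ha
            have := Finset.mem_filter.1 ha
            omega
          rw [hnotD a haD]; exact hga
      simp only []
      rw [hset]
    · have hsub : {a | g a = m} ⊂ {a | f a = m} := by
        constructor
        · intro a hga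
          simp only [Set.mem_setOf_eq] at *
          have haD : a ∉ D := by
            intro ha
            have := hmle a ha
            have := Finset.mem_filter.1 ha
            omega
          rw [hnotD a haD]; exact hga
        · intro hsub'
          have h1 : a0 ∈ {a | f a = m} := ha0
          have h2 := hsub' h1
          simp only [Set.mem_setOf_eq] at h2
          have := Finset.mem_filter.1 ha0D
          omega
      exact Set.ncard_lt_ncard hsub (Set.toFinite _)

/-- Suppose every agent `a` has at least one unassigned rank, and `L a` is the
largest rank not assigned to any revealed house of `a`.  Let
`maxrank a h = rnk a h` for revealed `h` and `maxrank a h = L a` otherwise.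
If `M` is necessarily rank-maximal (rank-maximal under every completion), then `M`
is rank-maximal in the instance with rank function `maxrank`. -/
theorem nrm_implies_rankMaximal_maxrank {n : ℕ}
    (rev : Fin n → Finset (Fin n)) (rnk : Fin n → Fin n → Fin n)
    (hinj : ∀ a, Set.InjOn (rnk a) (rev a))
    (L : Fin n → Fin n)
    (hLunassigned : ∀ a, ∀ h ∈ rev a, rnk a h ≠ L a)
    (hLmax : ∀ a, ∀ r : Fin n, (∀ h ∈ rev a, rnk a h ≠ r) → r ≤ L a)
    (M : Equiv.Perm (Fin n))
    (hNRM : ∀ P : Fin n → (Fin n ≃ Fin n), HQCompletion rev rnk P →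
      RankMaximal (fun a h => (P a h : ℕ)) M) :
    RankMaximal (fun a h => if h ∈ rev a then (rnk a h : ℕ) else (L a : ℕ)) M := by
  classical
  intro M' hdom
  choose Q hQ using fun a => exists_perm_extendOn (rev a) (rnk a) (hinj a)
  set x : Fin n → Fin n := fun a => if M a ∈ rev a then M' a else M a with hx
  set P : Fin n → (Fin n ≃ Fin n) := fun a =>
    if _ : x a ∈ rev a then Q a else (Q a).trans (Equiv.swap (Q a (x a)) (L a)) with hPdef
  -- P is a completion
  have hP1 : ∀ a, ∀ h ∈ rev a, P a h = rnk a h := by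
    intro a h hh
    by_cases hxa : x a ∈ rev a
    · simp [hPdef, hxa, hQ a h hh]
    · simp only [hPdef, dif_neg hxa, Equiv.trans_apply, hQ a h hh]
      apply Equiv.swap_apply_of_ne_of_ne
      · intro heq
        have h1 : Q a h = Q a (x a) := by rw [hQ a h hh]; exact heq
        exact hxa (((Q a).injective h1) ▸ hh)
      · exact hLunassigned a h hh
  -- P agrees with maxrank on M
  have hP2 : ∀ a, ((P a (M a) : ℕ)) =
      (if M a ∈ rev a then ((rnk a (M a)) : ℕ) else ((L a) : ℕ)) := by
    intro a
    by_cases hma : M a ∈ rev a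
    · rw [if_pos hma, hP1 a (M a) hma]
    · rw [if_neg hma]
      have hxa : x a = M a := by simp [hx, hma]
      have hxnotin : x a ∉ rev a := by rw [hxa]; exact hma
      have : P a (M a) = L a := by
        simp only [hPdef, dif_neg hxnotin, Equiv.trans_apply, ← hxa]
        exact Equiv.swap_apply_left _ _
      rw [this]
  -- P is at most maxrank on M'
  have hP3 : ∀ a, ((P a (M' a) : ℕ)) ≤
      (if M' a ∈ rev a then ((rnk a (M' a)) : ℕ) else ((L a) : ℕ)) := by
    intro a
    by_cases hma : M' a ∈ rev a
    · rw [if_pos hma, hP1 a (M' a) hma]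
    · rw [if_neg hma]
      have hle : P a (M' a) ≤ L a := by
        apply hLmax a
        intro h hh heq
        have h1 : P a h = P a (M' a) := by rw [hP1 a h hh]; exact heq
        exact hma (((P a).injective h1) ▸ hh)
      exact_mod_cast hle
  have hNR := hNRM P hP1 M'
  apply hNR
  -- signatures of M coincide for P and maxrank
  have hsigM : sig (fun a h => ((P a h) : ℕ)) M
      = sig (fun a h => if h ∈ rev a then ((rnk a h) : ℕ) else ((L a) : ℕ)) M := by
    funext l
    show ({a : Fin n | ((P a (M a)) : ℕ) = l}).ncard
      = ({a : Fin n | (if M a ∈ rev a then ((rnk a (M a)) : ℕ) else ((L a) : ℕ)) = l}).ncard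
    have : {a : Fin n | ((P a (M a)) : ℕ) = l}
        = {a : Fin n | (if M a ∈ rev a then ((rnk a (M a)) : ℕ) else ((L a) : ℕ)) = l} := by
      ext a; simp only [Set.mem_setOf_eq, hP2 a]
    rw [this]
  rw [hsigM]
  -- compare M' signatures via the counting lemma
  have key := cnt_eq_or_dom (fun a => ((P a (M' a)) : ℕ))
    (fun a => if M' a ∈ rev a then ((rnk a (M' a)) : ℕ) else ((L a) : ℕ)) hP3
  have e1 : sig (fun a h => ((P a h) : ℕ)) M'
      = fun k => {a : Fin n | ((P a (M' a)) : ℕ) = k}.ncard := rfl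
  have e2 : sig (fun a h => if h ∈ rev a then ((rnk a h) : ℕ) else ((L a) : ℕ)) M'
      = fun k => {a : Fin n |
          (if M' a ∈ rev a then ((rnk a (M' a)) : ℕ) else ((L a) : ℕ)) = k}.ncard := rfl
  rcases key with heq | hdom'
  · rw [e1]
    have : (fun k => {a : Fin n | ((P a (M' a)) : ℕ) = k}.ncard)
        = sig (fun a h => if h ∈ rev a then ((rnk a h) : ℕ) else ((L a) : ℕ)) M' := by
      funext k; rw [e2]; exact heq k
    rw [this]
    exact hdom
  · refine sigDom_trans' ?_ hdom
    rw [e1, e2]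
    exact hdom'
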